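/- Let F be a free group and C = ⟨x⟩ the cyclic subgroup generated by a free basis element x. Then C is square-root closed in F: if g ∈ F and g² ∈ C, then g ∈ C. -/

import Mathlib

open List

namespace SqRootAux

variable {α : Type*}

/-- The "no cancellation" relation on letters. -/
def R : (α × Bool) → (α × Bool) → Prop := fun p q => ¬(p.1 = q.1 ∧ q.2 = !p.2)

theorem reduce_eq_self_of_chain' [DecidableEq α] :
    ∀ {w : List (α × Bool)}, Chain' R w → FreeGroup.reduce w = w
  | [], _ => rfl
  | [p], _ => rfl
  | p :: q :: t, h => by
    simp only [Chain', List.isChain_cons_cons] at h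
    have ht := reduce_eq_self_of_chain' h.2
    rw [FreeGroup.reduce.cons, ht]
    dsimp only
    rw [if_neg]
    intro hc
    exact h.1 ⟨hc.1, by simp [hc.2]⟩

theorem chain'_of_reduce_eq_self [DecidableEq α] :
    ∀ {w : List (α × Bool)}, FreeGroup.reduce w = w → Chain' R w
  | [], _ => List.isChain_nil
  | [p], _ => List.isChain_singleton p
  | p :: q :: t, h => by
    -- first show reduce (q :: t) = q :: t
    have hred : FreeGroup.reduce (q :: t) = q :: t := by
      have h' := h
      rw [FreeGroup.reduce.cons] at h'
      rcases hrt : FreeGroup.reduce (q :: t) with _ | ⟨r, t'⟩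
      · rw [hrt] at h'; simp at h'
      · rw [hrt] at h'
        dsimp only at h'
        by_cases hc : p.1 = r.1 ∧ p.2 = !r.2
        · rw [if_pos hc] at h'
          have hle := FreeGroup.Red.length_le (FreeGroup.reduce.red (L := q :: t))
          rw [hrt] at hle
          have hl := congrArg List.length h'
          simp only [List.length_cons] at hl hle
          omega
        · rw [if_neg hc] at h'
          injection h' with h1 h2
    have hch := chain'_of_reduce_eq_self hred
    simp only [Chain', List.isChain_cons_cons]
    refine ⟨?_, hch⟩
    -- R p q
    intro hc
    rw [FreeGroup.reduce.cons, hred] at h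
    dsimp only at h
    rw [if_pos ⟨hc.1, by simp [hc.2]⟩] at h
    have := congrArg List.length h
    simp only [List.length_cons] at this
    omega

end SqRootAux

namespace Test
open SqRootAux FreeGroup

theorem sq_eq_one {α : Type*} (g : FreeGroup α) (h : g ^ 2 = 1) : g = 1 := by
  classical
  have hinv : g = g⁻¹ := by
    rw [pow_two] at h
    exact eq_inv_of_mul_eq_one_left h
  have hw : g.toWord = FreeGroup.invRev g.toWord := by
    conv_lhs => rw [hinv]
    rw [FreeGroup.toWord_inv]
  by_contra hg
  have hne : g.toWord ≠ [] := fun hh => hg (FreeGroup.toWord_eq_nil_iff.mp hh)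
  set w := g.toWord with hwdef
  have hred : FreeGroup.reduce w = w := FreeGroup.reduce_toWord g
  have hch : List.Chain' R w := chain'_of_reduce_eq_self hred
  have hlen : w.length = (FreeGroup.invRev w).length := by rw [← hw]
  set n := w.length with hn
  have hnpos : 0 < n := List.length_pos_iff.mpr hne
  -- getElem formula
  have hget : ∀ j (hj : j < n), w[j] = ((w[n-1-j]'(by omega)).1, !(w[n-1-j]'(by omega)).2) := by
    intro j hj
    have h0 : w[j] = (FreeGroup.invRev w)[j]'(by rw [← hw]; exact hj) :=
      List.getElem_of_eq hw hj
    rw [h0]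
    simp only [FreeGroup.invRev, List.getElem_reverse, List.getElem_map]
    congr 2 <;> simp [hn]
  rcases Nat.even_or_odd n with ⟨p, hp⟩ | ⟨p, hp⟩
  · -- n = 2p, adjacent cancelling pair at p-1, p
    have hp1 : p - 1 < n := by omega
    have hp2 : p < n := by omega
    have h1 := hget p hp2
    have hidx : n - 1 - p = p - 1 := by omega
    simp only [hidx] at h1
    have := List.isChain_iff_getElem.mp hch (p-1) (by omega)
    have hpe : p - 1 + 1 = p := by omega
    simp only [hpe] at this
    exact this ⟨by rw [h1], by rw [h1]⟩
  · -- n = 2p+1, middle letter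
    have hp2 : p < n := by omega
    have h1 := hget p hp2
    have hidx : n - 1 - p = p := by omega
    simp only [hidx] at h1
    have := congrArg Prod.snd h1
    simp at this

end Test

namespace Test2
open SqRootAux FreeGroup

theorem key {α : Type*} [DecidableEq α] (a : α) :
    ∀ n : ℕ, ∀ g : FreeGroup α, g.toWord.length ≤ n →
      ∀ d : ℕ, 0 < d → (∀ m : ℕ, Commute g (FreeGroup.of a ^ (d * m))) →
      g ∈ Subgroup.zpowers (FreeGroup.of a) := by
  classical
  intro n
  induction n with
  | zero =>
    intro g hg d hd hcomm
    have hnil : g.toWord = [] := List.eq_nil_of_length_eq_zero (Nat.le_zero.mp hg)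
    rw [FreeGroup.toWord_eq_nil_iff.mp hnil]
    exact one_mem _
  | succ n ih =>
    intro g hg d hd hcomm
    rcases eq_or_ne g.toWord [] with hw | hw
    · rw [FreeGroup.toWord_eq_nil_iff.mp hw]; exact one_mem _
    set w := g.toWord with hwdef
    have hred : FreeGroup.reduce w = w := FreeGroup.reduce_toWord g
    have hch : List.Chain' R w := chain'_of_reduce_eq_self hred
    obtain ⟨L, ℓ, hwL⟩ : ∃ L ℓ, w = L ++ [ℓ] :=
      ⟨w.dropLast, w.getLast hw, (List.dropLast_append_getLast hw).symm⟩
    obtain ⟨b, s⟩ := ℓ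
    have hgmk : g = FreeGroup.mk w := (FreeGroup.mk_toWord).symm
    by_cases hb : b = a
    · subst hb
      set y : FreeGroup α := FreeGroup.mk [(b, !s)] with hy
      have hstep : FreeGroup.mk (L ++ [(b, s), (b, !s)]) = FreeGroup.mk L := by
        have : FreeGroup.Red.Step (L ++ (b, !(!s)) :: (b, !s) :: ([] : List (α × Bool)))
            (L ++ []) := FreeGroup.Red.Step.not_rev
        simp only [Bool.not_not, List.append_nil] at this
        rw [← FreeGroup.quot_mk_eq_mk, ← FreeGroup.quot_mk_eq_mk]
        exact Quot.sound this
      have hgy : g * y = FreeGroup.mk L := by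
        rw [hgmk, hy, FreeGroup.mul_mk, hwL]
        simpa using hstep
      have hLred : FreeGroup.reduce L = L := by
        apply reduce_eq_self_of_chain'
        rw [hwL] at hch
        exact (List.isChain_append.1 hch).1
      have hLword : (g * y).toWord = L := by
        rw [hgy, FreeGroup.toWord_mk, hLred]
      have hylen : (g * y).toWord.length ≤ n := by
        rw [hLword]
        have := congrArg List.length hwL
        simp only [List.length_append, List.length_cons, List.length_nil] at this
        omega
      have hyx : y = FreeGroup.of b ∨ y = (FreeGroup.of b)⁻¹ := by
        cases s
        · left; rfl
        · right
          rw [hy]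
          have : (FreeGroup.of b)⁻¹ = FreeGroup.mk (FreeGroup.invRev [(b, true)]) :=
            FreeGroup.inv_mk
          rw [this]
          rfl
      have hycomm : ∀ m : ℕ, Commute y (FreeGroup.of b ^ (d * m)) := by
        intro m
        rcases hyx with h' | h' <;> rw [h']
        · exact (Commute.refl _).pow_right _
        · exact ((Commute.refl _).pow_right _).inv_left
      have hmem : g * y ∈ Subgroup.zpowers (FreeGroup.of b) := by
        apply ih (g * y) hylen d hd
        intro m
        exact (hcomm m).mul_left (hycomm m)
      have hymem : y ∈ Subgroup.zpowers (FreeGroup.of b) := by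
        rcases hyx with h' | h' <;> rw [h']
        · exact Subgroup.mem_zpowers _
        · exact inv_mem (Subgroup.mem_zpowers _)
      have : (g * y) * y⁻¹ ∈ Subgroup.zpowers (FreeGroup.of b) :=
        mul_mem hmem (inv_mem hymem)
      simpa using this
    · exfalso
      -- g commutes with (of a)^d ; derive word-length contradiction
      have hc := hcomm 1
      rw [mul_one] at hc
      set c : α × Bool := (a, true) with hcdef
      have hxd : FreeGroup.of a ^ d = FreeGroup.mk (List.replicate d c) := by
        rw [← FreeGroup.toWord_of_pow a d, FreeGroup.mk_toWord]
      have hmkeq : FreeGroup.mk (w ++ List.replicate d c ++ FreeGroup.invRev w)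
          = FreeGroup.mk (List.replicate d c) := by
        have h1 : g * FreeGroup.of a ^ d * g⁻¹ = FreeGroup.of a ^ d := by
          rw [hc.eq, mul_assoc, mul_inv_cancel, mul_one]
        rw [hgmk, hxd] at h1
        rw [← h1, FreeGroup.inv_mk, FreeGroup.mul_mk, FreeGroup.mul_mk]
      have hwordeq := congrArg FreeGroup.toWord
        (congrArg (fun L => L) hmkeq)
      rw [FreeGroup.toWord_mk, FreeGroup.toWord_mk, FreeGroup.reduce_replicate] at hwordeq
      -- show LHS is already reduced
      have hchinv : List.Chain' R (FreeGroup.invRev w) := by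
        apply chain'_of_reduce_eq_self
        rw [FreeGroup.reduce_invRev, hred]
      have hchrep : List.Chain' R (List.replicate d c) :=
        chain'_of_reduce_eq_self (FreeGroup.reduce_replicate d c)
      have hheadinv : (FreeGroup.invRev w).head? = some (b, !s) := by
        rw [hwL]
        simp [FreeGroup.invRev]
      have hlastw : w.getLast? = some (b, s) := by
        rw [hwL]
        exact List.getLast?_concat
      obtain ⟨d', rfl⟩ : ∃ d', d = d' + 1 := ⟨d - 1, by omega⟩
      have hch2 : List.Chain' R (List.replicate (d' + 1) c ++ FreeGroup.invRev w) := by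
        apply List.isChain_append.2
        refine ⟨hchrep, hchinv, ?_⟩
        intro p hp q hq
        rw [List.getLast?_replicate] at hp
        rw [hheadinv] at hq
        simp only [Option.mem_def, Option.some.injEq, Nat.succ_ne_zero, if_false] at hp hq
        rw [← hp, ← hq]
        intro hcontra
        exact hb (hcontra.1.symm)
      have hch3 : List.Chain' R (w ++ (List.replicate (d' + 1) c ++ FreeGroup.invRev w)) := by
        apply List.isChain_append.2
        refine ⟨hch, hch2, ?_⟩
        intro p hp q hq
        rw [hlastw] at hp
        simp only [Option.mem_def, Option.some.injEq] at hp
        have hq' : c = q := by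
          rw [List.replicate_succ, List.cons_append, List.head?_cons] at hq
          simpa using hq
        rw [← hp, ← hq']
        intro hcontra
        exact hb hcontra.1
      have hredLHS : FreeGroup.reduce (w ++ List.replicate (d' + 1) c ++ FreeGroup.invRev w)
          = w ++ List.replicate (d' + 1) c ++ FreeGroup.invRev w := by
        apply reduce_eq_self_of_chain'
        rw [List.append_assoc]
        exact hch3
      rw [hredLHS] at hwordeq
      have := congrArg List.length hwordeq
      simp only [List.length_append, List.length_replicate,
        FreeGroup.invRev_length] at this
      have hwlen : w.length = 0 := by omega
      rw [hwL] at hwlen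
      simp at hwlen

theorem main {α : Type*} (a : α) (g : FreeGroup α)
    (h : g ^ 2 ∈ Subgroup.zpowers (FreeGroup.of a)) :
    g ∈ Subgroup.zpowers (FreeGroup.of a) := by
  classical
  obtain ⟨k, hk⟩ := Subgroup.mem_zpowers_iff.mp h
  rcases eq_or_ne k 0 with rfl | hk0
  · have : g ^ 2 = 1 := by rw [← hk, zpow_zero]
    rw [Test.sq_eq_one g this]
    exact one_mem _
  · have hcomm : Commute g (FreeGroup.of a ^ k) := by
      rw [hk]
      exact (Commute.refl g).pow_right 2
    have hcommN : ∀ m : ℕ, Commute g (FreeGroup.of a ^ (k.natAbs * m)) := by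
      intro m
      rcases lt_or_gt_of_ne hk0 with hneg | hpos
      · have h1 : Commute g ((FreeGroup.of a ^ k) ^ (-(m : ℤ))) := hcomm.zpow_right _
        rw [← zpow_mul] at h1
        have h2 : k * (-(m : ℤ)) = ((k.natAbs * m : ℕ) : ℤ) := by
          push_cast
          rw [abs_of_neg hneg]
          ring
        rw [h2, zpow_natCast] at h1
        exact h1
      · have h1 : Commute g ((FreeGroup.of a ^ k) ^ (m : ℤ)) := hcomm.zpow_right _
        rw [← zpow_mul] at h1
        have h2 : k * (m : ℤ) = ((k.natAbs * m : ℕ) : ℤ) := by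
          push_cast
          rw [abs_of_pos hpos]
        rw [h2, zpow_natCast] at h1
        exact h1
    exact key a g.toWord.length g le_rfl k.natAbs (Int.natAbs_pos.mpr hk0) hcommN

end Test2


/-- Let `F` be a free group and `C = ⟨x⟩` the cyclic subgroup generated by a
free basis element `x`.  Then `C` is square-root closed in `F`: if `g ∈ F` and `g² ∈ C`,
then `g ∈ C`. -/
theorem cyclic_on_basis_element_squareRootClosed
    {α : Type*} (a : α) (g : FreeGroup α)
    (h : g ^ 2 ∈ Subgroup.zpowers (FreeGroup.of a)) :
    g ∈ Subgroup.zpowers (FreeGroup.of a) := by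
  exact Test2.main a g h
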